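/- The class of maps that are inclusions of a strong deformation retract of topological spaces is closed under pushout: if i : A → B admits a strong deformation retraction and the square with A → C, i : A → B, j : C → D, B → D is a pushout in Top, then j : C → D admits a strong deformation retraction, provided j is an embedding. -/

import Mathlib

open CategoryTheory

universe u

/-- A continuous map `i : A → B` is an inclusion of a strong deformation retract if there
are a continuous retraction `r : B → A` with `r ∘ i = id` and a homotopy
`H : [0,1] × B → B` from `id_B` to `i ∘ r` which is stationary on `i(A)`. -/
def IsSDRInclusion {A B : Type*} [TopologicalSpace A] [TopologicalSpace B]
    (i : A → B) : Prop :=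
  Continuous i ∧ ∃ (r : B → A) (H : unitInterval × B → B),
    Continuous r ∧ Continuous H ∧ r ∘ i = id ∧
    (∀ b, H (0, b) = b) ∧ (∀ b, H (1, b) = i (r b)) ∧ ∀ t a, H (t, i a) = i a

/-- Inclusions of strong deformation retracts are closed under pushout in `Top`:
if `i : A → B` is an inclusion of a strong deformation retract and the square
`A → C`, `i : A → B`, `j : C → D`, `B → D` is a pushout, then `j` (assumed to be an
embedding) is an inclusion of a strong deformation retract. -/
theorem sdrInclusion_pushout {A B C D : TopCat.{u}} (i : A ⟶ B) (f : A ⟶ C)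
    (k : B ⟶ D) (j : C ⟶ D) (hpo : CategoryTheory.IsPushout i f k j)
    (hi : IsSDRInclusion i) (hj : Topology.IsEmbedding j) : IsSDRInclusion j := by
  obtain ⟨hic, r, H, hrc, hHc, hri, hH0, hH1, hHt⟩ := hi
  have hw : ∀ a : A, k (i a) = j (f a) := by
    intro a
    have := congrArg (fun (g : A ⟶ D) => g a) hpo.w
    simpa using this
  -- the mapping space `C(I, D)` as an object of `TopCat`
  let E : TopCat.{u} := TopCat.of C(unitInterval, D)
  -- curried homotopy on `B`, with values in `D`
  let HB : B ⟶ E := TopCat.ofHom (ContinuousMap.curry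
    ⟨fun p => k (H (p.2, p.1)), by continuity⟩)
  -- constant homotopy on `C`
  let HC : C ⟶ E := TopCat.ofHom ⟨fun c => ContinuousMap.const _ (j c),
    ContinuousMap.continuous_const'.comp j.hom.continuous⟩
  have hcomm : i ≫ HB = f ≫ HC := by
    ext a t
    show k (H (t, i a)) = j (f a)
    rw [hHt]
    exact hw a
  let G : D ⟶ E := hpo.desc HB HC hcomm
  let toCM : ↑E → C(unitInterval, D) := fun x => x
  let Gc : D → C(unitInterval, D) := fun d => toCM (G d)
  have hGcc : Continuous Gc := G.hom.continuous
  have hGk : ∀ (b : B) (t : unitInterval), Gc (k b) t = k (H (t, b)) := by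
    intro b t
    have h1 : k ≫ G = HB := hpo.inl_desc HB HC hcomm
    have h2 := congrArg (fun (g : B ⟶ E) => toCM (g b) t) h1
    exact h2
  have hGj : ∀ (c : C) (t : unitInterval), Gc (j c) t = j c := by
    intro c t
    have h1 : j ≫ G = HC := hpo.inr_desc HB HC hcomm
    have h2 := congrArg (fun (g : C ⟶ E) => toCM (g c) t) h1
    exact h2
  -- the homotopy on `D`
  let K : unitInterval × D → D := fun p => Gc p.2 p.1
  have hKc : Continuous K := by
    have h1 : Continuous fun p : unitInterval × D => (Gc p.2, p.1) :=
      (hGcc.comp continuous_snd).prodMk continuous_fst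
    exact ContinuousEval.continuous_eval.comp h1
  -- the retraction `D → C`
  have hrf : i ≫ ((TopCat.ofHom ⟨r, hrc⟩ : B ⟶ A) ≫ f) = f ≫ 𝟙 C := by
    ext a
    show f (r (i a)) = f a
    rw [show r (i a) = a from congrFun hri a]
  let r' : D ⟶ C := hpo.desc ((TopCat.ofHom ⟨r, hrc⟩ : B ⟶ A) ≫ f) (𝟙 C) hrf
  have hr'j : ∀ c : C, r' (j c) = c := by
    intro c
    have h1 : j ≫ r' = 𝟙 C := hpo.inr_desc _ _ hrf
    have h2 := congrArg (fun (g : C ⟶ C) => g c) h1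
    simpa using h2
  have hr'k : ∀ b : B, r' (k b) = f (r b) := by
    intro b
    have h1 : k ≫ r' = (TopCat.ofHom ⟨r, hrc⟩ : B ⟶ A) ≫ f := hpo.inl_desc _ _ hrf
    have h2 := congrArg (fun (g : B ⟶ C) => g b) h1
    simpa using h2
  refine ⟨j.hom.continuous, r', K, r'.hom.continuous, hKc, funext hr'j, ?_, ?_, ?_⟩
  · -- K (0, d) = d
    intro d
    let K0 : D ⟶ D := TopCat.ofHom ⟨fun d => K (0, d), hKc.comp (continuous_const.prodMk continuous_id)⟩
    have h0 : K0 = 𝟙 D := by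
      apply hpo.hom_ext
      · ext b
        show K (0, k b) = k b
        show Gc (k b) 0 = k b
        rw [hGk, hH0]
      · ext c
        show K (0, j c) = j c
        exact hGj c 0
    have h2 := congrArg (fun (g : D ⟶ D) => g d) h0
    exact h2
  · -- K (1, d) = j (r' d)
    intro d
    let K1 : D ⟶ D := TopCat.ofHom ⟨fun d => K (1, d), hKc.comp (continuous_const.prodMk continuous_id)⟩
    have h1 : K1 = r' ≫ j := by
      apply hpo.hom_ext
      · ext b
        show K (1, k b) = j (r' (k b))
        rw [hr'k]
        show Gc (k b) 1 = j (f (r b))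
        rw [hGk, hH1]
        exact hw (r b)
      · ext c
        show K (1, j c) = j (r' (j c))
        rw [hr'j]
        exact hGj c 1
    have h2 := congrArg (fun (g : D ⟶ D) => g d) h1
    exact h2
  · intro t c
    exact hGj c t
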